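/- Define the lifted Goursat word LG(W) of a Goursat word W = R·W' as follows: remove the initial R; if the resulting word begins with a symbol followed by V (i.e., the new second symbol is V), replace that V by R and replace any immediately succeeding T's by R's, stopping at the next R, next V, or end of word. Then LG(W) is again a Goursat word, of length one less than W. -/

import Mathlib

/-- The alphabet `{R, V, T}` of RVT/Goursat code words. -/
inductive RVT : Type
  | R : RVT
  | V : RVT
  | T : RVT
deriving DecidableEq

open RVT

/-- A Goursat word: nonempty, starts with `R`, the symbol in position 2
(if any) is not `V`, and every `T` is immediately preceded by `V` or `T`
(hence the first non-`R` symbol, if any, is `V`). -/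
def IsGoursat (W : List RVT) : Prop :=
  W ≠ [] ∧ W.head? = some R ∧ W[1]? ≠ some V ∧
    ∀ i : ℕ, W[i + 1]? = some T →
      (W[i]? = some V ∨ W[i]? = some T)

/-- Replace an initial run of `T`'s by `R`'s, stopping at the next `R`,
the next `V`, or the end of the word. -/
def repairT : List RVT → List RVT
  | [] => []
  | T :: rest => R :: repairT rest
  | s :: rest => s :: rest

/-- The lifted Goursat word `LG(W)`: remove the initial `R`; if the new
second symbol is `V`, replace it by `R` and likewise replace any immediately
succeeding `T`'s by `R`'s. -/
def LG : List RVT → List RVT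
  | _ :: x :: V :: rest => x :: R :: repairT rest
  | _ :: rest => rest
  | [] => []

lemma repairT_length (l : List RVT) : (repairT l).length = l.length := by
  match l with
  | [] => rfl
  | T :: rest => simp [repairT, repairT_length rest]
  | R :: rest => rfl
  | V :: rest => rfl

lemma repairT_head_ne_T (l : List RVT) : (repairT l)[0]? ≠ some T := by
  match l with
  | [] => simp [repairT]
  | T :: rest => simp [repairT]
  | R :: rest => simp [repairT]
  | V :: rest => simp [repairT]

lemma repairT_prop (l : List RVT)
    (h : ∀ i, l[i+1]? = some T → l[i]? = some V ∨ l[i]? = some T) :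
    ∀ i, (repairT l)[i+1]? = some T →
      (repairT l)[i]? = some V ∨ (repairT l)[i]? = some T := by
  match l with
  | [] => intro i hi; simp [repairT] at hi
  | T :: rest =>
    intro i hi
    simp only [repairT] at hi ⊢
    match i with
    | 0 =>
      exfalso
      exact repairT_head_ne_T rest hi
    | Nat.succ j =>
      have := repairT_prop rest (fun i hT => h (i+1) hT) j hi
      simpa using this
  | R :: rest =>
    intro i hi
    simp only [repairT] at hi ⊢
    exact h i hi
  | V :: rest =>
    intro i hi
    simp only [repairT] at hi ⊢
    exact h i hi

/-- if `W` is a Goursat word (of length at least 2), then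
`LG(W)` is again a Goursat word, of length one less than `W`. -/
theorem LG_isGoursat (W : List RVT) (hW : IsGoursat W) (hlen : 2 ≤ W.length) :
    IsGoursat (LG W) ∧ (LG W).length = W.length - 1 := by
  obtain ⟨hne, hhead, hpos1, hT⟩ := hW
  match W with
  | [] => simp at hlen
  | [_] => simp at hlen
  | a :: x :: rest =>
    have ha : a = R := by simpa using hhead
    subst ha
    have hx : x = R := by
      cases x with
      | R => rfl
      | V => simp at hpos1
      | T =>
        have := hT 0 (by simp)
        simp at this
    subst hx
    match rest with
    | [] =>
      refine ⟨⟨by simp [LG], by simp [LG], by simp [LG], ?_⟩, by simp [LG]⟩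
      intro i hi
      match i with
      | 0 => simp [LG] at hi
      | Nat.succ j => simp [LG] at hi
    | c :: rest' =>
      have hc : c = R ∨ c = V := by
        cases c with
        | R => exact Or.inl rfl
        | V => exact Or.inr rfl
        | T =>
          have := hT 1 (by simp)
          simp at this
      rcases hc with hc | hc
      · subst hc
        have hLG : LG (R :: R :: R :: rest') = R :: R :: rest' := rfl
        rw [hLG]
        refine ⟨⟨by simp, by simp, by simp, ?_⟩, by simp⟩
        intro i hi
        have := hT (i+1) (by simpa using hi)
        simpa using this
      · subst hc
        have hLG : LG (R :: R :: V :: rest') = R :: R :: repairT rest' := rfl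
        rw [hLG]
        have hrest : ∀ i, rest'[i+1]? = some T →
            rest'[i]? = some V ∨ rest'[i]? = some T := by
          intro i hi
          have := hT (i+3) (by simpa using hi)
          simpa using this
        refine ⟨⟨by simp, by simp, by simp, ?_⟩, by simp [repairT_length]⟩
        intro i hi
        match i with
        | 0 => simp at hi
        | 1 =>
          exfalso
          exact repairT_head_ne_T rest' (by simpa using hi)
        | Nat.succ (Nat.succ j) =>
          have := repairT_prop rest' hrest j (by simpa using hi)
          simpa using this
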